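/- Let g_1, …, g_n ∈ F_{q^m} be linearly independent over F_q and r_1, …, r_n ∈ F_{q^m}. Let Π(X) = ∏_{g ∈ span_{F_q}(g_1,…,g_n)} (X − g) and let Λ be the q-Lagrange polynomial with Λ(g_i) = r_i for all i. Then for q-linearized polynomials f and h over F_{q^m}, the following are equivalent: (1) f(g_i) + h(r_i) = 0 for all i = 1, …, n; (2) there exists a q-linearized polynomial a over F_{q^m} such that f(X) = a(Π(X)) − h(Λ(X)). -/

import Mathlib

open Polynomial

/-- `f` is a `q`-linearized polynomial: every monomial with nonzero coefficient
has exponent a power of `q`, i.e. `f = Σ aᵢ X^(q^i)`. -/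
def IsqLinearized (q : ℕ) {L : Type*} [Field L] (f : L[X]) : Prop :=
  ∀ i : ℕ, f.coeff i ≠ 0 → ∃ j : ℕ, i = q ^ j

section Basic
variable {q : ℕ} {L : Type*} [Field L]

lemma IsqLinearized.zero : IsqLinearized q (0 : L[X]) := fun i hi => by simp at hi

lemma IsqLinearized.add {f g : L[X]} (hf : IsqLinearized q f) (hg : IsqLinearized q g) :
    IsqLinearized q (f + g) := fun i hi => by
  rw [coeff_add] at hi
  rcases (by by_contra hc; push_neg at hc; simp [hc.1, hc.2] at hi :
    f.coeff i ≠ 0 ∨ g.coeff i ≠ 0) with h | h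
  · exact hf i h
  · exact hg i h

lemma IsqLinearized.neg {f : L[X]} (hf : IsqLinearized q f) : IsqLinearized q (-f) :=
  fun i hi => hf i (by simpa using hi)

lemma IsqLinearized.sub {f g : L[X]} (hf : IsqLinearized q f) (hg : IsqLinearized q g) :
    IsqLinearized q (f - g) := by
  rw [sub_eq_add_neg]; exact hf.add hg.neg

lemma IsqLinearized.C_mul {f : L[X]} (c : L) (hf : IsqLinearized q f) :
    IsqLinearized q (C c * f) := fun i hi => by
  rw [coeff_C_mul] at hi
  exact hf i (right_ne_zero_of_mul hi)

lemma IsqLinearized.X_pow (j : ℕ) : IsqLinearized q (X ^ q ^ j : L[X]) := fun i hi => by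
  rw [coeff_X_pow] at hi
  exact ⟨j, by by_contra hne; simp [if_neg (by omega : ¬ i = q ^ j)] at hi ⟩

lemma IsqLinearized.X : IsqLinearized q (X : L[X]) := by
  have h := IsqLinearized.X_pow (q := q) (L := L) 0
  rw [pow_zero, pow_one] at h
  exact h

lemma IsqLinearized.finset_sum {ι : Type*} {s : Finset ι} {f : ι → L[X]}
    (h : ∀ i ∈ s, IsqLinearized q (f i)) : IsqLinearized q (∑ i ∈ s, f i) := fun i hi => by
  rw [finset_sum_coeff] at hi
  obtain ⟨b, hb, hbne⟩ := Finset.exists_ne_zero_of_sum_ne_zero hi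
  exact h b hb i hbne

lemma IsqLinearized.coeff_zero (hq2 : 2 ≤ q) {f : L[X]} (hf : IsqLinearized q f) :
    f.coeff 0 = 0 := by
  by_contra hc
  obtain ⟨j, hj⟩ := hf 0 hc
  have : 0 < q ^ j := pow_pos (by omega) j
  omega

lemma IsqLinearized.eval_zero (hq2 : 2 ≤ q) {f : L[X]} (hf : IsqLinearized q f) :
    f.eval 0 = 0 := by
  rw [← Polynomial.coeff_zero_eq_eval_zero]; exact hf.coeff_zero hq2

lemma IsqLinearized.natDegree_eq (hq2 : 2 ≤ q) {f : L[X]} (hf : IsqLinearized q f)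
    (h0 : f ≠ 0) : ∃ j, f.natDegree = q ^ j :=
  hf _ (by rw [← Polynomial.leadingCoeff]; exact leadingCoeff_ne_zero.2 h0)

end Basic

section S
variable {p k q : ℕ} [Fact p.Prime] {L : Type*} [Field L] [CharP L p]

lemma IsqLinearized.finset_sum' {ι : Type*} {s : Finset ι} {f : ι → L[X]}
    (h : ∀ i ∈ s, IsqLinearized q (f i)) : IsqLinearized q (∑ i ∈ s, f i) := fun i hi => by
  rw [finset_sum_coeff] at hi
  obtain ⟨b, hb, hbne⟩ := Finset.exists_ne_zero_of_sum_ne_zero hi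
  exact h b hb i hbne

lemma IsqLinearized.C_mul' {f : L[X]} (c : L) (hf : IsqLinearized q f) :
    IsqLinearized q (C c * f) := fun i hi => by
  rw [coeff_C_mul] at hi
  exact hf i (right_ne_zero_of_mul hi)

lemma qpow_add (hqpk : q = p ^ k) (x y : L) (j : ℕ) :
    (x + y) ^ q ^ j = x ^ q ^ j + y ^ q ^ j := by
  subst hqpk; rw [← pow_mul, add_pow_char_pow]

lemma qpow_add_poly (hqpk : q = p ^ k) (x y : L[X]) (j : ℕ) :
    (x + y) ^ q ^ j = x ^ q ^ j + y ^ q ^ j := by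
  subst hqpk; rw [← pow_mul, add_pow_char_pow]

lemma qlin_pow_q (hqpk : q = p ^ k) {f : L[X]} (hf : IsqLinearized q f) :
    IsqLinearized q (f ^ q) := by
  subst hqpk
  intro i hi
  rw [← Polynomial.map_iterateFrobenius_expand, Polynomial.coeff_map] at hi
  have h1 : (Polynomial.expand L (p ^ k) f).coeff i ≠ 0 := fun h => by simp [h] at hi
  rw [Polynomial.coeff_expand (pow_pos (Fact.out : Nat.Prime p).pos k)] at h1
  by_cases hd : p ^ k ∣ i
  · rw [if_pos hd] at h1
    obtain ⟨j, hj⟩ := hf _ h1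
    exact ⟨j + 1, by rw [pow_succ, ← hj]; exact (Nat.div_mul_cancel hd).symm⟩
  · simp [if_neg hd] at h1

lemma qlin_pow_qpow (hqpk : q = p ^ k) {f : L[X]} (hf : IsqLinearized q f) (j : ℕ) :
    IsqLinearized q (f ^ q ^ j) := by
  induction j with
  | zero => simpa using hf
  | succ j ih => rw [pow_succ, pow_mul]; exact qlin_pow_q hqpk ih

lemma IsqLinearized.comp (hqpk : q = p ^ k) {f g : L[X]} (hf : IsqLinearized q f)
    (hg : IsqLinearized q g) : IsqLinearized q (f.comp g) := by
  rw [comp_eq_sum_left, Polynomial.sum_def]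
  apply IsqLinearized.finset_sum'
  intro i hi
  obtain ⟨j, rfl⟩ := hf i (mem_support_iff.1 hi)
  exact IsqLinearized.C_mul' _ (qlin_pow_qpow hqpk hg j)

lemma qlin_eval_add (hqpk : q = p ^ k) {f : L[X]} (hf : IsqLinearized q f) (x y : L) :
    f.eval (x + y) = f.eval x + f.eval y := by
  rw [eval_eq_sum, eval_eq_sum, eval_eq_sum, Polynomial.sum_def, Polynomial.sum_def,
    Polynomial.sum_def, ← Finset.sum_add_distrib]
  apply Finset.sum_congr rfl
  intro i hi
  obtain ⟨j, rfl⟩ := hf i (mem_support_iff.1 hi)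
  rw [qpow_add hqpk, mul_add]

lemma qlin_comp_X_add_C (hqpk : q = p ^ k) {f : L[X]} (hf : IsqLinearized q f) (a : L) :
    f.comp (X + C a) = f + C (f.eval a) := by
  have hterm : ∀ i ∈ f.support, C (f.coeff i) * (X + C a) ^ i
      = monomial i (f.coeff i) + C (f.coeff i * a ^ i) := by
    intro i hi
    obtain ⟨j, rfl⟩ := hf i (mem_support_iff.1 hi)
    rw [qpow_add_poly hqpk, ← C_pow, mul_add, ← C_mul, C_mul_X_pow_eq_monomial]
  rw [comp_eq_sum_left, Polynomial.sum_def, Finset.sum_congr rfl hterm,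
    Finset.sum_add_distrib, ← f.as_sum_support, ← map_sum C]
  congr 1
  rw [eval_eq_sum, Polynomial.sum_def]

lemma qlin_eval_algebraMap_mul {F : Type*} [Field F] [Fintype F] [Algebra F L]
    (hcardF : Fintype.card F = q) {f : L[X]} (hf : IsqLinearized q f) (c : F) (x : L) :
    f.eval (algebraMap F L c * x) = algebraMap F L c * f.eval x := by
  rw [eval_eq_sum, eval_eq_sum, Polynomial.sum_def, Polynomial.sum_def, Finset.mul_sum]
  apply Finset.sum_congr rfl
  intro i hi
  obtain ⟨j, rfl⟩ := hf i (mem_support_iff.1 hi)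
  have hc : c ^ q ^ j = c := by rw [← hcardF]; exact FiniteField.pow_card_pow j c
  rw [mul_pow, ← map_pow, hc]
  ring

end S

section S
variable {q : ℕ} {L : Type*} [Field L]

lemma qlin_Xq_sub_CX (a : L) : IsqLinearized q (X ^ q - C a * X) := by
  intro i hi
  rcases eq_or_ne i q with rfl | hiq
  · exact ⟨1, by rw [pow_one]⟩
  rcases eq_or_ne i 1 with rfl | hi1
  · exact ⟨0, by rw [pow_zero]⟩
  exfalso
  apply hi
  simp [coeff_sub, coeff_X_pow, coeff_C_mul, coeff_X, hiq, Ne.symm hi1]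

lemma prod_X_sub_C_smul {F : Type*} [Field F] [Fintype F] [Algebra F L]
    (hcardF : Fintype.card F = q) (hq2 : 2 ≤ q) {s : L} (hs : s ≠ 0) :
    ∏ c : F, (X - C (algebraMap F L c * s)) = X ^ q - C (s ^ (q - 1)) * X := by
  set R : L[X] := X ^ q - C (s ^ (q - 1)) * X with hR
  set Q : L[X] := ∏ c : F, (X - C (algebraMap F L c * s)) with hQ
  have hQm : Q.Monic := monic_prod_of_monic _ _ fun c _ => monic_X_sub_C _
  have hQdeg : Q.natDegree = q := by
    rw [hQ, natDegree_prod _ _ (fun c _ => X_sub_C_ne_zero _)]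
    have h1 : ∀ c : F, (X - C (algebraMap F L c * s)).natDegree = 1 :=
      fun c => natDegree_X_sub_C _
    simp only [h1, Finset.sum_const, Finset.card_univ, smul_eq_mul, mul_one, hcardF]
  have hdegCX : (C (s ^ (q - 1)) * X : L[X]).degree < (X ^ q : L[X]).degree := by
    rw [degree_X_pow]
    refine lt_of_le_of_lt (degree_C_mul_X_le _) ?_
    exact_mod_cast (by omega : (1 : ℕ) < q)
  have hRdeg : R.degree = (q : WithBot ℕ) := by
    rw [hR, degree_sub_eq_left_of_degree_lt hdegCX, degree_X_pow]
  have hRne : R ≠ 0 := fun h => by rw [h, degree_zero] at hRdeg; simp at hRdeg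
  have hRm : R.Monic := by
    rw [Monic, hR, leadingCoeff, natDegree_eq_of_degree_eq_some hRdeg]
    rw [coeff_sub, coeff_X_pow, if_pos rfl, coeff_C_mul, coeff_X, if_neg (by omega)]
    simp
  have hss : s ^ (q - 1) * s = s ^ q := by
    rw [← pow_succ]; congr 1; omega
  have hRroot : ∀ c : F, R.eval (algebraMap F L c * s) = 0 := by
    intro c
    have hc : (algebraMap F L c) ^ q = algebraMap F L c := by
      rw [← map_pow, ← hcardF, FiniteField.pow_card]
    simp only [hR, eval_sub, eval_pow, eval_mul, eval_C, eval_X]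
    calc (algebraMap F L c * s) ^ q - s ^ (q - 1) * (algebraMap F L c * s)
        = algebraMap F L c * (s ^ (q - 1) * s) - s ^ (q - 1) * (algebraMap F L c * s) := by
          rw [mul_pow, hc, hss]
      _ = 0 := by ring
  have hQroot : ∀ c : F, Q.eval (algebraMap F L c * s) = 0 := by
    intro c
    rw [hQ, eval_prod]
    apply Finset.prod_eq_zero (Finset.mem_univ c)
    simp
  have hinj : Function.Injective (fun c : F => algebraMap F L c * s) := by
    intro a b hab
    simp only at hab
    exact (algebraMap F L).injective (mul_right_cancel₀ hs hab)
  have hzero : Q - R = 0 := by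
    apply eq_zero_of_natDegree_lt_card_of_eval_eq_zero _ hinj
    · intro c
      rw [eval_sub, hRroot, hQroot, sub_zero]
    · rw [hcardF]
      by_cases h0 : Q - R = 0
      · rw [h0]; simpa using (by omega : 0 < q)
      · have hdlt : (Q - R).degree < Q.degree := by
          apply degree_sub_lt _ hQm.ne_zero (by rw [hQm.leadingCoeff, hRm.leadingCoeff])
          rw [hRdeg, degree_eq_natDegree hQm.ne_zero, hQdeg]
        have := natDegree_lt_natDegree h0 hdlt
        omega
  rw [sub_eq_zero] at hzero
  exact hzero

end S

section Pi
variable {p k q : ℕ} [Fact p.Prime] {F L : Type*} [Field F] [Field L] [Fintype F]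
  [Finite L] [Algebra F L] [CharP L p]

lemma qlin_eval_neg (hqpk : q = p ^ k) (hq2 : 2 ≤ q) {f : L[X]} (hf : IsqLinearized q f)
    (x : L) : f.eval (-x) = -f.eval x := by
  have h := qlin_eval_add hqpk hf x (-x)
  rw [add_neg_cancel, hf.eval_zero hq2] at h
  linear_combination -h

lemma prod_toFinset_congr {A B : Set L} (h : A = B) :
    ∏ u ∈ A.toFinite.toFinset, (X - C u) = ∏ u ∈ B.toFinite.toFinset, (X - C u) := by
  subst h; rfl

lemma pi_qlin (hqpk : q = p ^ k) (hq2 : 2 ≤ q) (hcardF : Fintype.card F = q)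
    (s : Finset L) :
    IsqLinearized q
      (∏ u ∈ ((Submodule.span F (s : Set L) : Set L)).toFinite.toFinset, (X - C u)) := by
  classical
  induction s using Finset.induction_on with
  | empty =>
    have hset : ((Submodule.span F ((∅ : Finset L) : Set L) : Set L)) = {0} := by
      rw [Finset.coe_empty, Submodule.span_empty, Submodule.bot_coe]
    rw [prod_toFinset_congr hset]
    have hfin : (({0} : Set L)).toFinite.toFinset = ({0} : Finset L) := by
      ext x; simp [Set.Finite.mem_toFinset]
    rw [hfin, Finset.prod_singleton, map_zero, sub_zero]
    exact IsqLinearized.X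
  | @insert t s hts ih =>
    by_cases htsp : t ∈ Submodule.span F (s : Set L)
    · have hset : (Submodule.span F ((insert t s : Finset L) : Set L) : Set L)
          = (Submodule.span F (s : Set L) : Set L) := by
        rw [Finset.coe_insert, Submodule.span_insert_eq_span htsp]
      rw [prod_toFinset_congr hset]
      exact ih
    · set S' := ((Submodule.span F (s : Set L) : Set L)).toFinite.toFinset with hS'
      set P' := ∏ u ∈ S', (X - C u) with hP'
      have hmemS' : ∀ u : L, u ∈ S' ↔ u ∈ Submodule.span F (s : Set L) := by
        intro u; rw [hS', Set.Finite.mem_toFinset]; rfl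
      have hs0 : P'.eval t ≠ 0 := by
        rw [hP', eval_prod]
        rw [Finset.prod_ne_zero_iff]
        intro u hu
        rw [eval_sub, eval_X, eval_C, sub_ne_zero]
        rintro rfl
        exact htsp ((hmemS' t).1 hu)
      set s0 := P'.eval t with hs0def
      -- Step A : product over span (insert) equals double product
      have stepA : ∏ u ∈ ((Submodule.span F ((insert t s : Finset L) : Set L) : Set L)).toFinite.toFinset,
            (X - C u)
          = ∏ x ∈ (Finset.univ : Finset F) ×ˢ S', (X - C (algebraMap F L x.1 * t + x.2)) := by
        symm
        apply Finset.prod_bij (i := fun (x : F × L) _ => algebraMap F L x.1 * t + x.2)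
        · intro x hx
          rw [Set.Finite.mem_toFinset]
          have hxt : x.2 ∈ Submodule.span F (s : Set L) :=
            (hmemS' x.2).1 (Finset.mem_product.1 hx).2
          have h1 : t ∈ Submodule.span F ((insert t s : Finset L) : Set L) := by
            apply Submodule.subset_span
            rw [Finset.coe_insert]; exact Set.mem_insert _ _
          have h2 : x.2 ∈ Submodule.span F ((insert t s : Finset L) : Set L) := by
            refine Submodule.span_mono ?_ hxt
            rw [Finset.coe_insert]; exact Set.subset_insert _ _
          have := Submodule.add_mem _ (Submodule.smul_mem _ x.1 h1) h2
          rwa [Algebra.smul_def] at this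
        · intro a ha b hb hab
          by_cases hc : a.1 = b.1
          · have : a.2 = b.2 := by
              rw [hc] at hab
              exact add_left_cancel hab
            exact Prod.ext hc this
          · exfalso
            apply htsp
            have hsub : (algebraMap F L a.1 - algebraMap F L b.1) * t = b.2 - a.2 := by
              ring_nf
              linear_combination hab
            have hne : a.1 - b.1 ≠ 0 := sub_ne_zero.2 hc
            have hmem : b.2 - a.2 ∈ Submodule.span F (s : Set L) :=
              Submodule.sub_mem _ ((hmemS' b.2).1 (Finset.mem_product.1 hb).2)
                ((hmemS' a.2).1 (Finset.mem_product.1 ha).2)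
            have ht' : t = (a.1 - b.1)⁻¹ • (b.2 - a.2) := by
              rw [Algebra.smul_def, ← hsub, ← map_sub, ← mul_assoc, ← map_mul,
                inv_mul_cancel₀ hne, map_one, one_mul]
            rw [ht']
            exact Submodule.smul_mem _ _ hmem
        · intro v hv
          rw [Set.Finite.mem_toFinset] at hv
          have hv' : v ∈ Submodule.span F (insert t (s : Set L)) := by
            rwa [Finset.coe_insert] at hv
          obtain ⟨a, z, hz, rfl⟩ := Submodule.mem_span_insert.1 hv'
          refine ⟨(a, z), Finset.mem_product.2 ⟨Finset.mem_univ _, (hmemS' z).2 hz⟩, ?_⟩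
          rw [Algebra.smul_def]
        · intro x hx; rfl
      -- Step B : double product as composition
      have hinner : ∀ c : F, ∏ u ∈ S', (X - C (algebraMap F L c * t + u))
          = P' - C (algebraMap F L c * s0) := by
        intro c
        have h1 : ∀ u ∈ S', (X - C (algebraMap F L c * t + u))
            = (X - C u).comp (X + C (-(algebraMap F L c * t))) := by
          intro u _
          rw [sub_comp, X_comp, C_comp, map_add, map_neg]
          ring
        rw [Finset.prod_congr rfl h1, ← prod_comp, ← hP',
          qlin_comp_X_add_C hqpk ih, qlin_eval_neg hqpk hq2 ih,
          qlin_eval_algebraMap_mul hcardF ih, ← hs0def, map_neg, ← sub_eq_add_neg]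
      have stepB : ∏ x ∈ (Finset.univ : Finset F) ×ˢ S', (X - C (algebraMap F L x.1 * t + x.2))
          = (∏ c : F, (X - C (algebraMap F L c * s0))).comp P' := by
        rw [show (∏ x ∈ (Finset.univ : Finset F) ×ˢ S', (X - C (algebraMap F L x.1 * t + x.2)))
            = ∏ c : F, ∏ u ∈ S', (X - C (algebraMap F L c * t + u)) from
          Finset.prod_product' Finset.univ S' (fun c u => X - C (algebraMap F L c * t + u))]
        rw [Finset.prod_congr rfl (fun c _ => hinner c), prod_comp]
        apply Finset.prod_congr rfl
        intro c _
        rw [sub_comp, X_comp, C_comp]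
      rw [stepA, stepB, prod_X_sub_C_smul hcardF hq2 hs0]
      exact IsqLinearized.comp hqpk (qlin_Xq_sub_CX _) ih

end Pi

section Ore
variable {p k q : ℕ} [Fact p.Prime] {L : Type*} [Field L] [CharP L p]

lemma ore_aux (hqpk : q = p ^ k) (hq2 : 2 ≤ q) {P : L[X]} (hm : P.Monic)
    (hP : IsqLinearized q P) :
    ∀ N : ℕ, ∀ G : L[X], IsqLinearized q G → G.natDegree < N → P ∣ G →
      ∃ a : L[X], IsqLinearized q a ∧ G = a.comp P := by
  intro N
  induction N using Nat.strong_induction_on with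
  | _ N ih =>
  intro G hG hdeg hdvd
  by_cases hG0 : G = 0
  · exact ⟨0, IsqLinearized.zero, by simp [hG0]⟩
  obtain ⟨NN, hNN⟩ := hG.natDegree_eq hq2 hG0
  obtain ⟨ν, hν⟩ := hP.natDegree_eq hq2 hm.ne_zero
  have hdegle : P.natDegree ≤ G.natDegree := natDegree_le_of_dvd hdvd hG0
  have hνNN : ν ≤ NN := by
    rw [hNN, hν] at hdegle
    exact (pow_le_pow_iff_right₀ (by omega : 1 < q)).1 hdegle
  set e := NN - ν with he
  set T : L[X] := C G.leadingCoeff * P ^ q ^ e with hT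
  have hTcomp : T = (C G.leadingCoeff * X ^ q ^ e).comp P := by
    rw [mul_comp, C_comp, X_pow_comp]
  have hlc : G.leadingCoeff ≠ 0 := leadingCoeff_ne_zero.2 hG0
  have hTdeg : T.natDegree = G.natDegree := by
    rw [hT, natDegree_C_mul hlc, natDegree_pow, hν, ← pow_add, hNN]
    congr 1
    omega
  have hTlc : T.leadingCoeff = G.leadingCoeff := by
    rw [hT, leadingCoeff_mul, leadingCoeff_C, (hm.pow _).leadingCoeff, mul_one]
  have hT0 : T ≠ 0 := by
    intro hc
    rw [hc] at hTlc
    exact hG0 (leadingCoeff_eq_zero.1 hTlc.symm)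
  have hdegeq : G.degree = T.degree := by
    rw [degree_eq_natDegree hT0, degree_eq_natDegree hG0, hTdeg]
  have hlt : (G - T).degree < G.degree := degree_sub_lt hdegeq hG0 hTlc.symm
  have hqlinT : IsqLinearized q T := by
    rw [hTcomp]
    exact IsqLinearized.comp hqpk (IsqLinearized.C_mul _ (IsqLinearized.X_pow e)) hP
  have hdvdT : P ∣ T := Dvd.dvd.mul_left (dvd_pow_self P (by positivity)) _
  have hdvdG' : P ∣ G - T := dvd_sub hdvd hdvdT
  have hqlinG' : IsqLinearized q (G - T) := hG.sub hqlinT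
  by_cases hG'0 : G - T = 0
  · refine ⟨C G.leadingCoeff * X ^ q ^ e, IsqLinearized.C_mul _ (IsqLinearized.X_pow e), ?_⟩
    rw [← hTcomp, ← sub_eq_zero, hG'0]
  · obtain ⟨a', ha'q, ha'⟩ := ih G.natDegree hdeg (G - T) hqlinG'
      (natDegree_lt_natDegree hG'0 hlt) hdvdG'
    refine ⟨a' + C G.leadingCoeff * X ^ q ^ e,
      ha'q.add (IsqLinearized.C_mul _ (IsqLinearized.X_pow e)), ?_⟩
    rw [add_comp, ← hTcomp, ← ha']
    ring

lemma ore (hqpk : q = p ^ k) (hq2 : 2 ≤ q) {P : L[X]} (hm : P.Monic)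
    (hP : IsqLinearized q P) {G : L[X]} (hG : IsqLinearized q G) (hdvd : P ∣ G) :
    ∃ a : L[X], IsqLinearized q a ∧ G = a.comp P :=
  ore_aux hqpk hq2 hm hP (G.natDegree + 1) G hG (by omega) hdvd

end Ore

lemma prod_X_sub_C_dvd_of_eval_eq_zero {L : Type*} [Field L] (S : Finset L) (G : L[X])
    (h : ∀ u ∈ S, G.eval u = 0) : (∏ u ∈ S, (X - C u)) ∣ G := by
  classical
  by_cases hG0 : G = 0
  · simp [hG0]
  have hle : S.val ≤ G.roots := by
    rw [Multiset.le_iff_count]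
    intro a
    rw [count_roots]
    by_cases ha : a ∈ S
    · have h1 : S.val.count a = 1 := Multiset.count_eq_one_of_mem S.nodup ha
      rw [h1]
      exact (rootMultiplicity_pos hG0).2 (h a ha)
    · have h0 : S.val.count a = 0 := Multiset.count_eq_zero_of_notMem (by simpa using ha)
      rw [h0]
      omega
  calc (∏ u ∈ S, (X - C u)) = (S.val.map fun u => X - C u).prod := rfl
    _ ∣ (G.roots.map fun u => X - C u).prod :=
        Multiset.prod_dvd_prod_of_le (Multiset.map_le_map hle)
    _ ∣ G := prod_multiset_X_sub_C_dvd G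

/-- Characterization of the interpolation module: for `q`-linearized `f, h`, one has
`f(gᵢ) + h(rᵢ) = 0` for all `i` if and only if `f = a ∘ Π − h ∘ Λ` for some
`q`-linearized `a`, where `Π` is the `q`-annihilator polynomial of `span(g₁,…,gₙ)` and
`Λ` is the `q`-Lagrange polynomial for the data. -/
theorem interpolation_module_characterization
    (q m : ℕ) (hq : IsPrimePow q) (hm : 0 < m)
    (F L : Type*) [Field F] [Field L] [Fintype F] [Fintype L] [Algebra F L]
    (hcardF : Fintype.card F = q) (hcardL : Fintype.card L = q ^ m)
    (n : ℕ) (hn : 0 < n) (g r : Fin n → L) (hg : LinearIndependent F g)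
    (Pi : L[X])
    (hPi : Pi = ∏ u ∈ ((Submodule.span F (Set.range g) : Set L)).toFinite.toFinset,
        (X - C u))
    (Λ : L[X]) (hΛlin : IsqLinearized q Λ) (hΛdeg : Λ.natDegree ≤ q ^ (n - 1))
    (hΛval : ∀ i, Λ.eval (g i) = r i)
    (f h : L[X]) (hf : IsqLinearized q f) (hh : IsqLinearized q h) :
    (∀ i, f.eval (g i) + h.eval (r i) = 0) ↔
      ∃ a : L[X], IsqLinearized q a ∧ f = a.comp Pi - h.comp Λ := by
  classical
  obtain ⟨p, k, hpp, hk, hqpk⟩ := hq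
  have hp : p.Prime := hpp.nat_prime
  haveI : Fact p.Prime := ⟨hp⟩
  have hqpk' : q = p ^ k := hqpk.symm
  have hq2 : 2 ≤ q := by
    rw [hqpk']
    calc 2 ≤ p := hp.two_le
    _ = p ^ 1 := (pow_one p).symm
    _ ≤ p ^ k := Nat.pow_le_pow_right hp.one_lt.le hk
  -- characteristic
  haveI : CharP F (ringChar F) := ringChar.charP F
  obtain ⟨n', hn'p, hcard'⟩ := FiniteField.card F (ringChar F)
  have hpr : ringChar F = p := by
    have h1 : p ∣ ringChar F ^ (n' : ℕ) := by
      rw [← hcard', hcardF, hqpk']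
      exact dvd_pow_self p (by omega)
    have h2 : p ∣ ringChar F := hp.dvd_of_dvd_pow h1
    exact ((Nat.prime_dvd_prime_iff_eq hp hn'p).1 h2).symm
  haveI : CharP F p := hpr ▸ ringChar.charP F
  haveI : CharP L p := charP_of_injective_algebraMap (algebraMap F L).injective p
  -- Pi facts
  have hrange : (Submodule.span F (Set.range g) : Set L)
      = (Submodule.span F ((Finset.univ.image g : Finset L) : Set L) : Set L) := by
    rw [Finset.coe_image, Finset.coe_univ, Set.image_univ]
  have hPiqlin : IsqLinearized q Pi := by
    rw [hPi, prod_toFinset_congr hrange]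
    exact pi_qlin hqpk' hq2 hcardF _
  have hPimonic : Pi.Monic := by
    rw [hPi]
    exact monic_prod_of_monic _ _ fun u _ => monic_X_sub_C u
  have hPieval0 : ∀ x ∈ Submodule.span F (Set.range g), Pi.eval x = 0 := by
    intro x hx
    rw [hPi, eval_prod]
    apply Finset.prod_eq_zero (i := x)
    · rwa [Set.Finite.mem_toFinset]
    · simp
  constructor
  · -- forward: vanishing → representation
    intro hvan
    set G := f + h.comp Λ with hG
    have hGq : IsqLinearized q G := hf.add (IsqLinearized.comp hqpk' hh hΛlin)
    have hGU : ∀ x ∈ Submodule.span F (Set.range g), G.eval x = 0 := by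
      intro x hx
      induction hx using Submodule.span_induction with
      | mem x hxm =>
        obtain ⟨i, rfl⟩ := hxm
        rw [hG, eval_add, eval_comp, hΛval]
        exact hvan i
      | zero => exact hGq.eval_zero hq2
      | add x y hxm hym hx hy => rw [qlin_eval_add hqpk' hGq, hx, hy, add_zero]
      | smul a x hxm hx =>
        rw [Algebra.smul_def, qlin_eval_algebraMap_mul hcardF hGq, hx, mul_zero]
    have hdvd : Pi ∣ G := by
      rw [hPi]
      apply prod_X_sub_C_dvd_of_eval_eq_zero
      intro u hu
      exact hGU u (by rwa [Set.Finite.mem_toFinset] at hu)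
    obtain ⟨a, haq, hGa⟩ := ore hqpk' hq2 hPimonic hPiqlin hGq hdvd
    refine ⟨a, haq, ?_⟩
    rw [← hGa, hG]
    ring
  · -- backward: representation → vanishing
    rintro ⟨a, haq, rfl⟩ i
    rw [eval_sub, eval_comp, eval_comp, hΛval,
      hPieval0 _ (Submodule.subset_span (Set.mem_range_self i)),
      haq.eval_zero hq2]
    ring
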